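/- arXiv:1705.09800 — 3 statements merged into one kernel-verified Lean document; each statement's English description precedes it below -/
import Mathlib

section
/- For a continuous, integrable random variable Z and α ∈ (0,1), the conditional value at risk CVaR_α(Z) = E[Z | Z ≥ VaR_α(Z)], where VaR_α(Z) = inf{c : P(Z ≤ c) ≥ α}, equals the minimum over c ∈ ℝ of c + (1/(1-α))·E[(Z - c)⁺] (Rockafellar–Uryasev representation). -/
open MeasureTheory Filter Set Topology

theorem cvar_aux {Ω : Type*} [MeasurableSpace Ω] (μ : Measure Ω)
    [IsProbabilityMeasure μ] (Z : Ω → ℝ) (hm : Measurable Z) (hZ : Integrable Z μ)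
    (hcont : ∀ c : ℝ, μ {ω | Z ω = c} = 0)
    (α : ℝ) (hα : α ∈ Set.Ioo (0 : ℝ) 1)
    (VaR : ℝ) (hVaR : VaR = sInf {c : ℝ | α ≤ (μ {ω | Z ω ≤ c}).toReal}) :
    (∫ ω in {ω | VaR ≤ Z ω}, Z ω ∂μ) / (μ {ω | VaR ≤ Z ω}).toReal
      = ⨅ c : ℝ, (c + (1 / (1 - α)) * ∫ ω, max (Z ω - c) 0 ∂μ) := by
  obtain ⟨hα0, hα1⟩ := hα
  have h1α : (0:ℝ) < 1 - α := by linarith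
  have hne : ∀ s : Set Ω, μ s ≠ ⊤ := fun s => measure_ne_top μ s
  have hFmono : ∀ a b : ℝ, a ≤ b →
      (μ {ω | Z ω ≤ a}).toReal ≤ (μ {ω | Z ω ≤ b}).toReal := by
    intro a b hab
    exact ENNReal.toReal_mono (hne _) (measure_mono fun ω h => le_trans h hab)
  -- S nonempty
  have hSne : {c : ℝ | α ≤ (μ {ω | Z ω ≤ c}).toReal}.Nonempty := by
    have hmono : Monotone (fun n : ℕ => {ω | Z ω ≤ (n:ℝ)}) := by
      intro a b hab ω h
      simp only [mem_setOf_eq] at h ⊢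
      exact le_trans h (by exact_mod_cast hab)
    have hU : (⋃ n : ℕ, {ω | Z ω ≤ (n:ℝ)}) = Set.univ := by
      ext ω; simp only [mem_iUnion, mem_univ, iff_true, mem_setOf_eq]
      exact exists_nat_ge (Z ω)
    have ht := tendsto_measure_iUnion_atTop (μ := μ) hmono
    rw [hU, measure_univ] at ht
    have ht2 : Tendsto (fun n : ℕ => (μ {ω | Z ω ≤ (n:ℝ)}).toReal) atTop (𝓝 (1:ℝ)) := by
      have := (ENNReal.tendsto_toReal (a := 1) (by simp)).comp ht
      simpa [Function.comp_def] using this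
    obtain ⟨n, hn⟩ := (ht2.eventually_const_le (by linarith : α < 1)).exists
    exact ⟨(n:ℝ), hn⟩
  -- ∃ b with F b < α
  have hbdd : ∃ b : ℝ, (μ {ω | Z ω ≤ b}).toReal < α := by
    have hanti : Antitone (fun n : ℕ => {ω | Z ω ≤ -(n:ℝ)}) := by
      intro a b hab ω h
      simp only [mem_setOf_eq] at h ⊢
      refine le_trans h (by simp; exact_mod_cast hab)
    have hI : (⋂ n : ℕ, {ω | Z ω ≤ -(n:ℝ)}) = (∅ : Set Ω) := by
      ext ω
      simp only [mem_iInter, mem_setOf_eq, mem_empty_iff_false, iff_false, not_forall]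
      obtain ⟨n, hn⟩ := exists_nat_gt (-(Z ω))
      exact ⟨n, by push_neg; linarith⟩
    have ht : Tendsto (fun n : ℕ => μ {ω | Z ω ≤ -(n:ℝ)}) atTop
        (𝓝 (μ (⋂ n : ℕ, {ω | Z ω ≤ -(n:ℝ)}))) := tendsto_measure_iInter_atTop
      (fun n => (hm measurableSet_Iic).nullMeasurableSet) hanti ⟨0, hne _⟩
    rw [hI, measure_empty] at ht
    have ht2 : Tendsto (fun n : ℕ => (μ {ω | Z ω ≤ -(n:ℝ)}).toReal) atTop (𝓝 (0:ℝ)) := by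
      have := (ENNReal.tendsto_toReal (a := 0) (by simp)).comp ht
      simpa [Function.comp_def] using this
    obtain ⟨n, hn⟩ := (ht2.eventually_lt_const hα0).exists
    exact ⟨-(n:ℝ), hn⟩
  obtain ⟨b, hb⟩ := hbdd
  have hSbdd : BddBelow {c : ℝ | α ≤ (μ {ω | Z ω ≤ c}).toReal} := by
    refine ⟨b, fun c hc => ?_⟩
    by_contra h
    push_neg at h
    exact absurd hc (not_le.2 (lt_of_le_of_lt (hFmono _ _ h.le) hb))
  -- α ≤ F c for c > VaR
  have hgt : ∀ c : ℝ, VaR < c → α ≤ (μ {ω | Z ω ≤ c}).toReal := by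
    intro c hc
    rw [hVaR] at hc
    obtain ⟨d, hdS, hdc⟩ := exists_lt_of_csInf_lt hSne hc
    exact le_trans hdS (hFmono _ _ hdc.le)
  -- F c < α for c < VaR
  have hlt : ∀ c : ℝ, c < VaR → (μ {ω | Z ω ≤ c}).toReal < α := by
    intro c hc
    by_contra h
    push_neg at h
    exact absurd (hVaR ▸ csInf_le hSbdd h) (not_le.2 hc)
  -- α ≤ F VaR
  have hα_le : α ≤ (μ {ω | Z ω ≤ VaR}).toReal := by
    have hanti : Antitone (fun n : ℕ => {ω | Z ω ≤ VaR + 1/((n:ℝ)+1)}) := by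
      intro a b hab ω h
      simp only [mem_setOf_eq] at h ⊢
      have : (1:ℝ)/((b:ℝ)+1) ≤ 1/((a:ℝ)+1) := by
        apply one_div_le_one_div_of_le (by positivity)
        exact add_le_add (Nat.cast_le.2 hab) le_rfl
      linarith
    have hI : (⋂ n : ℕ, {ω | Z ω ≤ VaR + 1/((n:ℝ)+1)}) = {ω | Z ω ≤ VaR} := by
      ext ω
      simp only [mem_iInter, mem_setOf_eq]
      constructor
      · intro h
        refine le_of_forall_pos_le_add fun ε hε => ?_
        obtain ⟨n, hn⟩ := exists_nat_one_div_lt hε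
        exact le_trans (h n) (by linarith [hn])
      · intro h n
        have : (0:ℝ) < 1/((n:ℝ)+1) := by positivity
        linarith
    have ht : Tendsto (fun n : ℕ => μ {ω | Z ω ≤ VaR + 1/((n:ℝ)+1)}) atTop
        (𝓝 (μ (⋂ n : ℕ, {ω | Z ω ≤ VaR + 1/((n:ℝ)+1)}))) := tendsto_measure_iInter_atTop
      (fun n => (hm measurableSet_Iic).nullMeasurableSet) hanti ⟨0, hne _⟩
    rw [hI] at ht
    have ht2 : Tendsto (fun n : ℕ => (μ {ω | Z ω ≤ VaR + 1/((n:ℝ)+1)}).toReal) atTop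
        (𝓝 ((μ {ω | Z ω ≤ VaR}).toReal)) := by
      have := (ENNReal.tendsto_toReal (hne _)).comp ht
      simpa [Function.comp_def] using this
    refine ge_of_tendsto ht2 (Eventually.of_forall fun n => ?_)
    refine hgt _ (lt_add_of_pos_right VaR ?_)
    positivity
  -- μ {Z < VaR} ≤ α
  have hlt_le : (μ {ω | Z ω < VaR}).toReal ≤ α := by
    have hmono : Monotone (fun n : ℕ => {ω | Z ω ≤ VaR - 1/((n:ℝ)+1)}) := by
      intro a b hab ω h
      simp only [mem_setOf_eq] at h ⊢
      have : (1:ℝ)/((b:ℝ)+1) ≤ 1/((a:ℝ)+1) := by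
        apply one_div_le_one_div_of_le (by positivity)
        exact add_le_add (Nat.cast_le.2 hab) le_rfl
      linarith
    have hU : (⋃ n : ℕ, {ω | Z ω ≤ VaR - 1/((n:ℝ)+1)}) = {ω | Z ω < VaR} := by
      ext ω
      simp only [mem_iUnion, mem_setOf_eq]
      constructor
      · rintro ⟨n, hn⟩
        have : (0:ℝ) < 1/((n:ℝ)+1) := by positivity
        linarith
      · intro h
        obtain ⟨n, hn⟩ := exists_nat_one_div_lt (sub_pos.2 h)
        exact ⟨n, by linarith⟩
    have ht := tendsto_measure_iUnion_atTop (μ := μ) hmono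
    rw [hU] at ht
    have ht2 : Tendsto (fun n : ℕ => (μ {ω | Z ω ≤ VaR - 1/((n:ℝ)+1)}).toReal) atTop
        (𝓝 ((μ {ω | Z ω < VaR}).toReal)) := by
      have := (ENNReal.tendsto_toReal (hne _)).comp ht
      simpa [Function.comp_def] using this
    refine le_of_tendsto ht2 (Eventually.of_forall fun n => ?_)
    refine (hlt _ ?_).le
    have : (0:ℝ) < 1/((n:ℝ)+1) := by positivity
    linarith
  -- μ {Z ≤ VaR} = μ {Z < VaR}
  have heq_lt : μ {ω | Z ω ≤ VaR} = μ {ω | Z ω < VaR} := by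
    refine le_antisymm ?_ (measure_mono fun ω (h : Z ω < VaR) => le_of_lt h)
    have hsub : {ω | Z ω ≤ VaR} ⊆ {ω | Z ω < VaR} ∪ {ω | Z ω = VaR} := by
      intro ω h
      have h' : Z ω ≤ VaR := h
      rcases lt_or_eq_of_le h' with h'' | h''
      · exact Or.inl h''
      · exact Or.inr h''
    calc μ {ω | Z ω ≤ VaR} ≤ μ ({ω | Z ω < VaR} ∪ {ω | Z ω = VaR}) := measure_mono hsub
      _ = μ {ω | Z ω < VaR} := le_antisymm
          (by simpa [hcont VaR] using measure_union_le (μ := μ) {ω | Z ω < VaR} {ω | Z ω = VaR})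
          (measure_mono subset_union_left)
  have hFlt : (μ {ω | Z ω < VaR}).toReal = α :=
    le_antisymm hlt_le (by rw [← heq_lt]; exact hα_le)
  -- P(A) = 1 - α
  have hAmeas : MeasurableSet {ω | VaR ≤ Z ω} := measurableSet_le measurable_const hm
  have hPA : (μ {ω | VaR ≤ Z ω}).toReal = 1 - α := by
    have h1 : {ω | Z ω < VaR}ᶜ = {ω | VaR ≤ Z ω} := by
      ext ω; simp [not_lt]
    rw [← h1, prob_compl_eq_one_sub (measurableSet_lt hm measurable_const),
      ENNReal.toReal_sub_of_le prob_le_one ENNReal.one_ne_top, ENNReal.toReal_one, hFlt]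
  -- integrability
  have hint : ∀ c : ℝ, Integrable (fun ω => max (Z ω - c) 0) μ :=
    fun c => (hZ.sub (integrable_const c)).pos_part
  -- value at VaR
  have hGv : (∫ ω, max (Z ω - VaR) 0 ∂μ)
      = (∫ ω in {ω | VaR ≤ Z ω}, Z ω ∂μ) - VaR * (1 - α) := by
    have hind : (fun ω => max (Z ω - VaR) 0)
        = {ω | VaR ≤ Z ω}.indicator (fun ω => Z ω - VaR) := by
      ext ω
      by_cases h : VaR ≤ Z ω
      · rw [Set.indicator_of_mem (show ω ∈ {ω | VaR ≤ Z ω} from h)]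
        exact max_eq_left (by linarith)
      · rw [Set.indicator_of_notMem (show ω ∉ {ω | VaR ≤ Z ω} from h)]
        push_neg at h
        exact max_eq_right (by linarith)
    rw [hind, integral_indicator hAmeas,
      integral_sub hZ.integrableOn (integrableOn_const (measure_ne_top μ _)),
      setIntegral_const, measureReal_def, hPA, smul_eq_mul]
    ring
  -- key inequality
  have key : ∀ c : ℝ, (∫ ω in {ω | VaR ≤ Z ω}, Z ω ∂μ) / (1 - α)
      ≤ c + (1 / (1 - α)) * ∫ ω, max (Z ω - c) 0 ∂μ := by
    intro c
    have hptwise : ∀ ω, max (Z ω - VaR) 0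
        + {ω | VaR ≤ Z ω}.indicator (fun _ => VaR - c) ω ≤ max (Z ω - c) 0 := by
      intro ω
      by_cases h : VaR ≤ Z ω
      · rw [Set.indicator_of_mem (show ω ∈ {ω | VaR ≤ Z ω} from h)]
        have h1 : Z ω - c ≤ max (Z ω - c) 0 := le_max_left _ _
        have h2 : max (Z ω - VaR) 0 = Z ω - VaR := max_eq_left (by linarith)
        linarith
      · rw [Set.indicator_of_notMem (show ω ∉ {ω | VaR ≤ Z ω} from h)]
        push_neg at h
        rw [add_zero, max_eq_right (by linarith : Z ω - VaR ≤ 0)]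
        exact le_max_right _ _
    have hintL : Integrable (fun ω => max (Z ω - VaR) 0
        + {ω | VaR ≤ Z ω}.indicator (fun _ => VaR - c) ω) μ :=
      (hint VaR).add ((integrable_const (VaR - c)).indicator hAmeas)
    have hmono := integral_mono hintL (hint c) hptwise
    rw [integral_add (hint VaR) ((integrable_const _).indicator hAmeas),
      integral_indicator hAmeas, setIntegral_const, measureReal_def, hPA, hGv, smul_eq_mul] at hmono
    rw [div_le_iff₀ h1α]
    have hexp : (c + 1 / (1 - α) * ∫ ω, max (Z ω - c) 0 ∂μ) * (1 - α)
        = c * (1 - α) + ∫ ω, max (Z ω - c) 0 ∂μ := by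
      field_simp
    rw [hexp]
    linarith
  -- conclude
  rw [hPA]
  have hbddR : BddBelow (Set.range fun c : ℝ =>
      c + (1 / (1 - α)) * ∫ ω, max (Z ω - c) 0 ∂μ) := by
    refine ⟨(∫ ω in {ω | VaR ≤ Z ω}, Z ω ∂μ) / (1 - α), ?_⟩
    rintro x ⟨c, rfl⟩
    exact key c
  refine le_antisymm (le_ciInf key) ?_
  calc (⨅ c : ℝ, (c + (1 / (1 - α)) * ∫ ω, max (Z ω - c) 0 ∂μ))
      ≤ VaR + (1 / (1 - α)) * ∫ ω, max (Z ω - VaR) 0 ∂μ := ciInf_le hbddR VaR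
    _ = (∫ ω in {ω | VaR ≤ Z ω}, Z ω ∂μ) / (1 - α) := by
        rw [hGv]
        field_simp
        ring

/-- Rockafellar–Uryasev representation of CVaR: for a continuous, integrable
random variable `Z` and `α ∈ (0,1)`,
`E[Z ∣ Z ≥ VaR_α(Z)] = min_c (c + (1/(1-α))·E[(Z-c)⁺])`. -/
theorem cvar_rockafellar_uryasev {Ω : Type*} [MeasurableSpace Ω] (μ : Measure Ω)
    [IsProbabilityMeasure μ] (Z : Ω → ℝ) (hZ : Integrable Z μ)
    (hcont : ∀ c : ℝ, μ {ω | Z ω = c} = 0)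
    (α : ℝ) (hα : α ∈ Set.Ioo (0 : ℝ) 1)
    (VaR : ℝ) (hVaR : VaR = sInf {c : ℝ | α ≤ (μ {ω | Z ω ≤ c}).toReal}) :
    (∫ ω in {ω | VaR ≤ Z ω}, Z ω ∂μ) / (μ {ω | VaR ≤ Z ω}).toReal
      = ⨅ c : ℝ, (c + (1 / (1 - α)) * ∫ ω, max (Z ω - c) 0 ∂μ) := by
  set W : Ω → ℝ := hZ.1.mk Z with hW
  have hmW : Measurable W := hZ.1.stronglyMeasurable_mk.measurable
  have hae : Z =ᵐ[μ] W := hZ.1.ae_eq_mk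
  have hZW : Integrable W μ := hZ.congr hae
  have hset_le : ∀ c : ℝ, μ {ω | Z ω ≤ c} = μ {ω | W ω ≤ c} := by
    intro c
    refine measure_congr ?_
    rw [Filter.eventuallyEq_set]
    filter_upwards [hae] with ω h
    simp [h]
  have hset_eq : ∀ c : ℝ, μ {ω | W ω = c} = 0 := by
    intro c
    have : μ {ω | Z ω = c} = μ {ω | W ω = c} := by
      refine measure_congr ?_
      rw [Filter.eventuallyEq_set]
      filter_upwards [hae] with ω h
      simp [h]
    rw [← this]; exact hcont c
  have hset_ge : {ω | VaR ≤ Z ω} =ᵐ[μ] {ω | VaR ≤ W ω} := by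
    rw [Filter.eventuallyEq_set]
    filter_upwards [hae] with ω h
    simp [h]
  have hVaR' : VaR = sInf {c : ℝ | α ≤ (μ {ω | W ω ≤ c}).toReal} := by
    rw [hVaR]
    congr 1
    ext c
    simp only [mem_setOf_eq, hset_le c]
  have hmain := cvar_aux μ W hmW hZW hset_eq α hα VaR hVaR'
  have h1 : (∫ ω in {ω | VaR ≤ Z ω}, Z ω ∂μ) = ∫ ω in {ω | VaR ≤ W ω}, W ω ∂μ := by
    rw [Measure.restrict_congr_set hset_ge]
    exact integral_congr_ae (ae_restrict_of_ae hae)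
  have h2 : μ {ω | VaR ≤ Z ω} = μ {ω | VaR ≤ W ω} := measure_congr hset_ge
  have h3 : ∀ c : ℝ, (∫ ω, max (Z ω - c) 0 ∂μ) = ∫ ω, max (W ω - c) 0 ∂μ := by
    intro c
    refine integral_congr_ae ?_
    filter_upwards [hae] with ω h
    rw [h]
  rw [h1, h2]
  rw [hmain]
  exact iInf_congr fun c => by rw [h3 c]
end

section
/- CVaR_α is subadditive: for integrable random variables Z₁, Z₂ on a common probability space, CVaR_α(Z₁ + Z₂) ≤ CVaR_α(Z₁) + CVaR_α(Z₂), where CVaR_α(Z) := inf_{c∈ℝ} [c + (1/(1-α))·E[(Z−c)⁺]]. -/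
open MeasureTheory

private lemma cvar_lb {Ω : Type*} [MeasurableSpace Ω] (μ : Measure Ω)
    [IsProbabilityMeasure μ] (Z : Ω → ℝ) (hZ : Integrable Z μ)
    {k : ℝ} (hk : 1 ≤ k) (c : ℝ) :
    (∫ ω, Z ω ∂μ) ≤ c + k * ∫ ω, max (Z ω - c) 0 ∂μ := by
  have hint : Integrable (fun ω => max (Z ω - c) 0) μ :=
    (hZ.sub (integrable_const c)).pos_part
  have hnonneg : 0 ≤ ∫ ω, max (Z ω - c) 0 ∂μ :=
    integral_nonneg fun ω => le_max_right _ _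
  have h1 : (∫ ω, Z ω ∂μ) - c ≤ ∫ ω, max (Z ω - c) 0 ∂μ := by
    have : (∫ ω, Z ω - c ∂μ) ≤ ∫ ω, max (Z ω - c) 0 ∂μ :=
      integral_mono (hZ.sub (integrable_const c)) hint fun ω => le_max_left _ _
    simpa [integral_sub hZ (integrable_const c), measure_univ] using this
  rcases le_or_gt (∫ ω, Z ω ∂μ) c with h | h
  · nlinarith
  · have h2 : (∫ ω, Z ω ∂μ) - c ≤ k * ∫ ω, max (Z ω - c) 0 ∂μ := by
      calc (∫ ω, Z ω ∂μ) - c ≤ ∫ ω, max (Z ω - c) 0 ∂μ := h1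
        _ ≤ k * ∫ ω, max (Z ω - c) 0 ∂μ := le_mul_of_one_le_left hnonneg hk
    linarith

/-- Subadditivity of CVaR: `CVaR_α(Z₁ + Z₂) ≤ CVaR_α(Z₁) + CVaR_α(Z₂)`. -/
theorem cvar_subadditive {Ω : Type*} [MeasurableSpace Ω] (μ : Measure Ω)
    [IsProbabilityMeasure μ] (Z₁ Z₂ : Ω → ℝ)
    (hZ₁ : Integrable Z₁ μ) (hZ₂ : Integrable Z₂ μ)
    (α : ℝ) (hα : α ∈ Set.Ioo (0 : ℝ) 1) :
    (⨅ c : ℝ, (c + (1 / (1 - α)) * ∫ ω, max ((Z₁ ω + Z₂ ω) - c) 0 ∂μ))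
      ≤ (⨅ c : ℝ, (c + (1 / (1 - α)) * ∫ ω, max (Z₁ ω - c) 0 ∂μ))
        + ⨅ c : ℝ, (c + (1 / (1 - α)) * ∫ ω, max (Z₂ ω - c) 0 ∂μ) := by
  obtain ⟨hα0, hα1⟩ := hα
  set k : ℝ := 1 / (1 - α) with hkdef
  have h1α : (0:ℝ) < 1 - α := by linarith
  have hk : 1 ≤ k := by
    rw [hkdef, le_div_iff₀ h1α]; linarith
  have hk0 : 0 ≤ k := by linarith
  have hZ : Integrable (fun ω => Z₁ ω + Z₂ ω) μ := hZ₁.add hZ₂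
  have hbdd : BddBelow (Set.range fun c : ℝ =>
      c + k * ∫ ω, max ((Z₁ ω + Z₂ ω) - c) 0 ∂μ) := by
    refine ⟨∫ ω, Z₁ ω + Z₂ ω ∂μ, ?_⟩
    rintro x ⟨c, rfl⟩
    exact cvar_lb μ _ hZ hk c
  refine le_ciInf_add_ciInf fun c₁ c₂ => ?_
  have hle : (⨅ c : ℝ, (c + k * ∫ ω, max ((Z₁ ω + Z₂ ω) - c) 0 ∂μ))
      ≤ (c₁ + c₂) + k * ∫ ω, max ((Z₁ ω + Z₂ ω) - (c₁ + c₂)) 0 ∂μ :=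
    ciInf_le hbdd (c₁ + c₂)
  refine hle.trans ?_
  have hi1 : Integrable (fun ω => max (Z₁ ω - c₁) 0) μ :=
    (hZ₁.sub (integrable_const c₁)).pos_part
  have hi2 : Integrable (fun ω => max (Z₂ ω - c₂) 0) μ :=
    (hZ₂.sub (integrable_const c₂)).pos_part
  have hmono : (∫ ω, max ((Z₁ ω + Z₂ ω) - (c₁ + c₂)) 0 ∂μ)
      ≤ ∫ ω, (max (Z₁ ω - c₁) 0 + max (Z₂ ω - c₂) 0) ∂μ := by
    refine integral_mono ((hZ.sub (integrable_const (c₁ + c₂))).pos_part)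
      (hi1.add hi2) fun ω => ?_
    have : Z₁ ω + Z₂ ω - (c₁ + c₂) ≤ max (Z₁ ω - c₁) 0 + max (Z₂ ω - c₂) 0 := by
      have := le_max_left (Z₁ ω - c₁) 0
      have := le_max_left (Z₂ ω - c₂) 0
      linarith
    exact max_le this (by positivity)
  rw [integral_add hi1 hi2] at hmono
  nlinarith [mul_le_mul_of_nonneg_left hmono hk0]
end

section
/- If b ↦ ℓ(b, X) is convex in b for every fixed outcome X, then the function (b, c) ↦ c + (1/(1-α))·E[(ℓ(b, X) - c)⁺] is jointly convex on B × ℝ, where B is a convex set. -/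
open MeasureTheory

/-- If `b ↦ ℓ(b, x)` is convex for each `x`, then
`(b, c) ↦ c + (1/(1-α))·E[(ℓ(b,X) - c)⁺]` is jointly convex on `B × ℝ`. -/
theorem cvar_loss_jointly_convex {d : ℕ} {𝒳 : Type*} [MeasurableSpace 𝒳]
    (μ : Measure 𝒳) [IsProbabilityMeasure μ]
    (B : Set (Fin d → ℝ)) (hB : Convex ℝ B)
    (ℓ : (Fin d → ℝ) → 𝒳 → ℝ)
    (hℓconv : ∀ x : 𝒳, ConvexOn ℝ B (fun b => ℓ b x))
    (hℓint : ∀ b ∈ B, Integrable (fun x => ℓ b x) μ)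
    (α : ℝ) (hα : α ∈ Set.Ioo (0 : ℝ) 1) :
    ConvexOn ℝ (B ×ˢ (Set.univ : Set ℝ))
      (fun p : (Fin d → ℝ) × ℝ =>
        p.2 + (1 / (1 - α)) * ∫ x, max (ℓ p.1 x - p.2) 0 ∂μ) := by
  have hα1 : (0:ℝ) < 1 - α := by linarith [hα.2]
  have hc0 : (0:ℝ) ≤ 1 / (1 - α) := by positivity
  have hint : ∀ b ∈ B, ∀ c : ℝ, Integrable (fun x => max (ℓ b x - c) 0) μ := by
    intro b hb c
    exact ((hℓint b hb).sub (integrable_const c)).pos_part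
  constructor
  · exact hB.prod convex_univ
  · rintro ⟨p1, p2⟩ ⟨hp, -⟩ ⟨q1, q2⟩ ⟨hq, -⟩ a b ha hb hab
    simp only [Prod.smul_mk, Prod.mk_add_mk, smul_eq_mul]
    have hmem : a • p1 + b • q1 ∈ B := hB hp hq ha hb hab
    have hptwise : ∀ x, max (ℓ (a • p1 + b • q1) x - (a * p2 + b * q2)) 0 ≤
        a * max (ℓ p1 x - p2) 0 + b * max (ℓ q1 x - q2) 0 := by
      intro x
      have h1 : ℓ (a • p1 + b • q1) x ≤ a * ℓ p1 x + b * ℓ q1 x := by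
        simpa using (hℓconv x).2 hp hq ha hb hab
      have h2 : a * (ℓ p1 x - p2) + b * (ℓ q1 x - q2) ≤
          a * max (ℓ p1 x - p2) 0 + b * max (ℓ q1 x - q2) 0 := by
        gcongr <;> exact le_max_left _ _
      have h3 : (0:ℝ) ≤ a * max (ℓ p1 x - p2) 0 + b * max (ℓ q1 x - q2) 0 := by
        have := le_max_right (ℓ p1 x - p2) 0
        have := le_max_right (ℓ q1 x - q2) 0
        positivity
      rw [max_le_iff]
      constructor
      · nlinarith
      · exact h3
    have hintL := hint _ hmem (a * p2 + b * q2)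
    have hintP := (hint _ hp p2).const_mul a
    have hintQ := (hint _ hq q2).const_mul b
    have hI : ∫ x, max (ℓ (a • p1 + b • q1) x - (a * p2 + b * q2)) 0 ∂μ ≤
        a * ∫ x, max (ℓ p1 x - p2) 0 ∂μ + b * ∫ x, max (ℓ q1 x - q2) 0 ∂μ := by
      rw [← integral_const_mul, ← integral_const_mul, ← integral_add hintP hintQ]
      exact integral_mono hintL (hintP.add hintQ) hptwise
    nlinarith [mul_le_mul_of_nonneg_left hI hc0]
end
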